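/- Let H be Gâteaux differentiable on ℝ^d, let h₀ be strongly convex with constant μ > 0 (i.e. x ↦ h₀(x) − (μ/2)|x|² is convex), and let a sequence {x_n} be generated by the convex-concave procedure for problem (P): x₀ is feasible for (P), and for each n, v_n ∈ ∂h₀(x_n) and x_{n+1} is a globally optimal solution of the convex problem: minimize g₀(x) − ⟨v_n, x − x_n⟩ subject to G(x) − H(x_n) − DH(x_n)(x − x_n) ⪯_K 0 and x ∈ A. Then f₀(x_{n+1}) ≤ f₀(x_n) − (μ/2)|x_{n+1} − x_n|² for all n. -/
import Mathlib


open scoped RealInnerProductSpace Pointwise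

/-- A function with values in a space ordered by a cone `K` is `K`-convex if
`Φ(αx₁ + (1−α)x₂) ⪯_K αΦ(x₁) + (1−α)Φ(x₂)` for all `x₁, x₂` and `α ∈ [0,1]`. -/
def KConvex {X Y : Type*} [AddCommGroup X] [Module ℝ X] [AddCommGroup Y] [Module ℝ Y]
    (K : Set Y) (Φ : X → Y) : Prop :=
  ∀ (x₁ x₂ : X) (α : ℝ), α ∈ Set.Icc (0 : ℝ) 1 →
    α • Φ x₁ + (1 - α) • Φ x₂ - Φ (α • x₁ + (1 - α) • x₂) ∈ K

/-- The subdifferential of a convex function `φ : ℝ^d → ℝ` at a point `x`. -/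
def subdiff {d : ℕ} (φ : EuclideanSpace ℝ (Fin d) → ℝ) (x : EuclideanSpace ℝ (Fin d)) :
    Set (EuclideanSpace ℝ (Fin d)) :=
  {w | ∀ y, φ x + ⟪w, y - x⟫ ≤ φ y}

theorem stmt_14 {d : ℕ} {Y : Type*}
    [NormedAddCommGroup Y] [NormedSpace ℝ Y] [CompleteSpace Y]
    (K : Set Y) (hKclosed : IsClosed K) (hKconvex : Convex ℝ K)
    (hKcone : ∀ c : ℝ, 0 ≤ c → ∀ y ∈ K, c • y ∈ K)
    (hKpointed : K ∩ (-K) = {0})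
    (g₀ h₀ : EuclideanSpace ℝ (Fin d) → ℝ)
    (hg₀ : ConvexOn ℝ Set.univ g₀) (hh₀ : ConvexOn ℝ Set.univ h₀)
    -- h₀ is strongly convex with constant μ > 0
    (μ : ℝ) (hμ : 0 < μ)
    (hstrong : ConvexOn ℝ Set.univ fun x : EuclideanSpace ℝ (Fin d) =>
      h₀ x - μ / 2 * ‖x‖ ^ 2)
    (G H : EuclideanSpace ℝ (Fin d) → Y)
    (hG : KConvex K G) (hH : KConvex K H)
    (A : Set (EuclideanSpace ℝ (Fin d))) (hAclosed : IsClosed A) (hAconvex : Convex ℝ A)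
    -- H is Gâteaux differentiable on ℝ^d with derivative DH
    (DH : EuclideanSpace ℝ (Fin d) → EuclideanSpace ℝ (Fin d) →L[ℝ] Y)
    (hGateaux : ∀ p u, Filter.Tendsto (fun t : ℝ => t⁻¹ • (H (p + t • u) - H p))
      (nhdsWithin 0 {(0 : ℝ)}ᶜ) (nhds (DH p u)))
    -- the sequence generated by the convex-concave procedure
    (x : ℕ → EuclideanSpace ℝ (Fin d)) (v : ℕ → EuclideanSpace ℝ (Fin d))
    (hx0 : x 0 ∈ A ∧ -(G (x 0) - H (x 0)) ∈ K)
    (hv : ∀ n, v n ∈ subdiff h₀ (x n))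
    (hsol : ∀ n, (x (n + 1) ∈ A ∧
        -(G (x (n + 1)) - H (x n) - DH (x n) (x (n + 1) - x n)) ∈ K) ∧
      ∀ y, y ∈ A → -(G y - H (x n) - DH (x n) (y - x n)) ∈ K →
        g₀ (x (n + 1)) - ⟪v n, x (n + 1) - x n⟫ ≤ g₀ y - ⟪v n, y - x n⟫) :
    ∀ n, g₀ (x (n + 1)) - h₀ (x (n + 1)) ≤
      g₀ (x n) - h₀ (x n) - μ / 2 * ‖x (n + 1) - x n‖ ^ 2 := by
  -- K is closed under addition
  have hKadd : ∀ a ∈ K, ∀ b ∈ K, a + b ∈ K := by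
    intro a ha b hb
    have h := hKconvex ha hb (by norm_num : (0:ℝ) ≤ 1/2) (by norm_num : (0:ℝ) ≤ 1/2)
      (by norm_num)
    have h2 := hKcone 2 (by norm_num) _ h
    have heq : a + b = (2:ℝ) • ((1/2 : ℝ) • a + (1/2 : ℝ) • b) := by module
    rw [heq]; exact h2
  -- K-convexity of H implies H(p+u) - H(p) - DH(p)u ∈ K
  have hHlin : ∀ p u, H (p + u) - H p - DH p u ∈ K := by
    intro p u
    have hmem : ∀ t : ℝ, t ∈ Set.Ioo (0:ℝ) 1 →
        H (p + u) - H p - t⁻¹ • (H (p + t • u) - H p) ∈ K := by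
      intro t ht
      have ht0 : (0:ℝ) < t := ht.1
      have h1 := hH (p + u) p t ⟨le_of_lt ht.1, le_of_lt ht.2⟩
      have heq : t • (p + u) + (1 - t) • p = p + t • u := by module
      rw [heq] at h1
      have h2 := hKcone t⁻¹ (by positivity) _ h1
      have heq2 : t⁻¹ • (t • H (p + u) + (1 - t) • H p - H (p + t • u)) =
          H (p + u) - H p - t⁻¹ • (H (p + t • u) - H p) := by
        match_scalars <;> (field_simp; try ring)
      rw [heq2] at h2
      exact h2
    have htend : Filter.Tendsto
        (fun t : ℝ => H (p + u) - H p - t⁻¹ • (H (p + t • u) - H p))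
        (nhdsWithin 0 (Set.Ioi 0)) (nhds (H (p + u) - H p - DH p u)) := by
      have hsub : Set.Ioi (0:ℝ) ⊆ {(0:ℝ)}ᶜ := by
        intro t ht; simpa using ne_of_gt ht
      exact tendsto_const_nhds.sub ((hGateaux p u).mono_left (nhdsWithin_mono 0 hsub))
    have hev : ∀ᶠ t in nhdsWithin (0:ℝ) (Set.Ioi 0),
        H (p + u) - H p - t⁻¹ • (H (p + t • u) - H p) ∈ K :=
      Filter.eventually_of_mem
        (Ioo_mem_nhdsGT_of_mem (⟨le_refl 0, by norm_num⟩ : (0:ℝ) ∈ Set.Ico (0:ℝ) 1)) hmem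
    exact hKclosed.mem_of_tendsto htend hev
  -- strong subgradient inequality
  have hs : StrongConvexOn Set.univ μ h₀ := strongConvexOn_iff_convex.2 hstrong
  have hsubg : ∀ n y, h₀ (x n) + ⟪v n, y - x n⟫ + μ / 2 * ‖y - x n‖ ^ 2 ≤ h₀ y := by
    intro n y
    set c := μ / 2 * ‖y - x n‖ ^ 2 with hc
    have hc0 : 0 ≤ c := by positivity
    have key : ∀ t : ℝ, t ∈ Set.Ioo (0:ℝ) 1 →
        h₀ (x n) + ⟪v n, y - x n⟫ + c ≤ h₀ y + t * c := by
      intro t ht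
      have hconv := hs.2 (Set.mem_univ y) (Set.mem_univ (x n)) ht.1.le
        (by linarith [ht.2] : (0:ℝ) ≤ 1 - t) (by ring)
      simp only [smul_eq_mul] at hconv
      have hvn := hv n (t • y + (1 - t) • x n)
      have hz : (t • y + (1 - t) • x n) - x n = t • (y - x n) := by module
      rw [hz, real_inner_smul_right] at hvn
      have hnn : ‖y - x n‖ = ‖y - x n‖ := rfl
      rw [hc]
      by_contra hcon
      push_neg at hcon
      nlinarith [ht.1, ht.2, hvn, hconv]
    have hle : ∀ ε : ℝ, 0 < ε → h₀ (x n) + ⟪v n, y - x n⟫ + c ≤ h₀ y + ε := by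
      intro ε hε
      set t := min (1/2 : ℝ) (ε / (c + 1)) with htd
      have ht1 : 0 < t := lt_min (by norm_num) (by positivity)
      have ht2 : t < 1 := lt_of_le_of_lt (min_le_left _ _) (by norm_num)
      have hkey := key t ⟨ht1, ht2⟩
      have htc : t * c ≤ ε := by
        have h1 : t ≤ ε / (c + 1) := min_le_right _ _
        have h2 : t * c ≤ (ε / (c + 1)) * (c + 1) := by
          have : t * c ≤ t * (c + 1) := by nlinarith
          calc t * c ≤ t * (c + 1) := this
            _ ≤ (ε / (c + 1)) * (c + 1) := by
                apply mul_le_mul_of_nonneg_right h1; linarith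
        rwa [div_mul_cancel₀] at h2
        positivity
      linarith
    linarith [le_of_forall_pos_le_add (fun ε hε => hle ε hε)]
  -- feasibility of each iterate
  have feas : ∀ n, x n ∈ A ∧ -(G (x n) - H (x n)) ∈ K := by
    intro n
    induction n with
    | zero => exact hx0
    | succ n ih =>
      obtain ⟨⟨hA1, hK1⟩, -⟩ := hsol n
      refine ⟨hA1, ?_⟩
      have h2 := hHlin (x n) (x (n+1) - x n)
      have heq : x n + (x (n+1) - x n) = x (n+1) := by abel
      rw [heq] at h2
      have h3 := hKadd _ hK1 _ h2
      have heq2 : -(G (x (n + 1)) - H (x n) - DH (x n) (x (n + 1) - x n)) +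
          (H (x (n + 1)) - H (x n) - DH (x n) (x (n + 1) - x n)) =
          -(G (x (n+1)) - H (x (n+1))) := by abel
      rwa [heq2] at h3
  intro n
  obtain ⟨⟨hA1, hK1⟩, hopt⟩ := hsol n
  have hyfeas : -(G (x n) - H (x n) - DH (x n) (x n - x n)) ∈ K := by
    rw [sub_self, map_zero, sub_zero]; exact (feas n).2
  have h1 := hopt (x n) (feas n).1 hyfeas
  rw [sub_self, inner_zero_right, sub_zero] at h1
  have h2 := hsubg n (x (n+1))
  linarith
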